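/- Suppose the Population EM and Sample-based EM iterates for Model 2 are started from the same initial parameters: μ̂1^0 = μ1^0 and μ̂2^0 = μ2^0. Then for each fixed iteration t ≥ 0, the Sample-based EM iterates converge in probability to the Population EM iterates as the sample size grows: for every ε > 0, P(‖μ̂1^t − μ1^t‖ > ε) → 0 and P(‖μ̂2^t − μ2^t‖ > ε) → 0 as n → ∞. -/

import Mathlib

open MeasureTheory ProbabilityTheory Real Filter InnerProductGeometry RealInnerProductSpace

/-- Standard Gaussian density on `ℝ^d` (identity covariance, mean zero). -/
noncomputable def gpdf (d : ℕ) (x : EuclideanSpace ℝ (Fin d)) : ℝ :=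
  (2 * π) ^ (-(d : ℝ) / 2) * Real.exp (-‖x‖ ^ 2 / 2)

/-- `v_d(y, μ1, μ2) = φ_d(y − μ1)/(φ_d(y − μ1) + φ_d(y − μ2))`. -/
noncomputable def v2 (d : ℕ) (y μ1 μ2 : EuclideanSpace ℝ (Fin d)) : ℝ :=
  gpdf d (y - μ1) / (gpdf d (y - μ1) + gpdf d (y - μ2))

/-- The density of the mixture `0.5 N(μ1*, I_d) + 0.5 N(μ2*, I_d)`. -/
noncomputable def mix2 (d : ℕ) (μ1s μ2s y : EuclideanSpace ℝ (Fin d)) : ℝ :=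
  (gpdf d (y - μ1s) + gpdf d (y - μ2s)) / 2

/-- Population EM iterates `(μ1^t, μ2^t)` for Model 2. -/
noncomputable def em2 (d : ℕ) (μ1s μ2s μ10 μ20 : EuclideanSpace ℝ (Fin d)) :
    ℕ → EuclideanSpace ℝ (Fin d) × EuclideanSpace ℝ (Fin d)
  | 0 => (μ10, μ20)
  | t + 1 =>
    let p := em2 d μ1s μ2s μ10 μ20 t
    ((∫ y, v2 d y p.1 p.2 * mix2 d μ1s μ2s y)⁻¹ •
        ∫ y, (v2 d y p.1 p.2 * mix2 d μ1s μ2s y) • y,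
     (∫ y, (1 - v2 d y p.1 p.2) * mix2 d μ1s μ2s y)⁻¹ •
        ∫ y, ((1 - v2 d y p.1 p.2) * mix2 d μ1s μ2s y) • y)

/-- Re-parameterized iterate `a^t = (μ1^t + μ2^t)/2 − (μ1* + μ2*)/2`. -/
noncomputable def aIter (d : ℕ) (μ1s μ2s μ10 μ20 : EuclideanSpace ℝ (Fin d)) (t : ℕ) :
    EuclideanSpace ℝ (Fin d) :=
  (2:ℝ)⁻¹ • ((em2 d μ1s μ2s μ10 μ20 t).1 + (em2 d μ1s μ2s μ10 μ20 t).2) -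
    (2:ℝ)⁻¹ • (μ1s + μ2s)

/-- Re-parameterized iterate `b^t = (μ2^t − μ1^t)/2`. -/
noncomputable def bIter (d : ℕ) (μ1s μ2s μ10 μ20 : EuclideanSpace ℝ (Fin d)) (t : ℕ) :
    EuclideanSpace ℝ (Fin d) :=
  (2:ℝ)⁻¹ • ((em2 d μ1s μ2s μ10 μ20 t).2 - (em2 d μ1s μ2s μ10 μ20 t).1)

/-- `θ* = (μ2* − μ1*)/2`. -/
noncomputable def thetaStar (d : ℕ) (μ1s μ2s : EuclideanSpace ℝ (Fin d)) :
    EuclideanSpace ℝ (Fin d) :=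
  (2:ℝ)⁻¹ • (μ2s - μ1s)

/-- Sample-based EM iterates `(μ̂1^t, μ̂2^t)` for Model 2, built from the first `n`
samples `ys 0, …, ys (n−1)`. -/
noncomputable def sem2 (d : ℕ) (ys : ℕ → EuclideanSpace ℝ (Fin d)) (n : ℕ)
    (μ10 μ20 : EuclideanSpace ℝ (Fin d)) :
    ℕ → EuclideanSpace ℝ (Fin d) × EuclideanSpace ℝ (Fin d)
  | 0 => (μ10, μ20)
  | t + 1 =>
    let p := sem2 d ys n μ10 μ20 t
    ((∑ i ∈ Finset.range n, v2 d (ys i) p.1 p.2)⁻¹ •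
        ∑ i ∈ Finset.range n, v2 d (ys i) p.1 p.2 • ys i,
     (∑ i ∈ Finset.range n, (1 - v2 d (ys i) p.1 p.2))⁻¹ •
        ∑ i ∈ Finset.range n, (1 - v2 d (ys i) p.1 p.2) • ys i)



/-! ### Auxiliary lemmas -/

section basics
variable {d : ℕ}
local notation "E" => EuclideanSpace ℝ (Fin d)

lemma gpdf_pos (x : E) : 0 < gpdf d x := by
  have h2π : (0:ℝ) < 2 * π := by positivity
  unfold gpdf
  positivity

lemma mix2_pos (μ1s μ2s y : E) : 0 < mix2 d μ1s μ2s y := by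
  unfold mix2; have := gpdf_pos (d := d) (y - μ1s); have := gpdf_pos (d := d) (y - μ2s)
  positivity

lemma continuous_gpdf : Continuous (gpdf d) := by
  unfold gpdf
  fun_prop

lemma continuous_mix2 (μ1s μ2s : E) : Continuous (mix2 d μ1s μ2s) := by
  unfold mix2
  exact (((continuous_gpdf.comp (continuous_id.sub continuous_const)).add
    (continuous_gpdf.comp (continuous_id.sub continuous_const))).div_const 2)

lemma v2_eq (y a b : E) :
    v2 d y a b = (1 + rexp ((‖y - a‖ ^ 2 - ‖y - b‖ ^ 2) / 2))⁻¹ := by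
  have h1 : 0 < gpdf d (y - a) := gpdf_pos _
  have h2 : 0 < gpdf d (y - b) := gpdf_pos _
  have key : rexp ((‖y - a‖ ^ 2 - ‖y - b‖ ^ 2) / 2) * gpdf d (y - a) = gpdf d (y - b) := by
    unfold gpdf
    rw [mul_left_comm, ← Real.exp_add]
    congr 2
    ring
  rw [v2, ← key, inv_eq_one_div, div_eq_div_iff (by positivity) (by positivity)]
  ring

lemma v2_pos (y a b : E) : 0 < v2 d y a b := by
  have h1 : 0 < gpdf d (y - a) := gpdf_pos _
  have h2 : 0 < gpdf d (y - b) := gpdf_pos _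
  exact div_pos h1 (by positivity)

lemma v2_le_one (y a b : E) : v2 d y a b ≤ 1 := by
  have h1 : 0 < gpdf d (y - a) := gpdf_pos _
  have h2 : 0 < gpdf d (y - b) := gpdf_pos _
  unfold v2
  exact div_le_one_of_le₀ (by linarith) (by linarith)

lemma one_sub_v2 (y a b : E) : 1 - v2 d y a b = v2 d y b a := by
  have h1 : 0 < gpdf d (y - a) := gpdf_pos _
  have h2 : 0 < gpdf d (y - b) := gpdf_pos _
  have ha : gpdf d (y - a) + gpdf d (y - b) ≠ 0 := by linarith
  have hb : gpdf d (y - b) + gpdf d (y - a) ≠ 0 := by linarith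
  unfold v2
  rw [add_comm (gpdf d (y - b)), eq_div_iff ha, sub_mul, div_mul_cancel₀ _ ha, one_mul]
  ring

lemma sig_lip (s t : ℝ) : |(1 + rexp s)⁻¹ - (1 + rexp t)⁻¹| ≤ |s - t| := by
  have hs : 0 < 1 + rexp s := by positivity
  have ht : 0 < 1 + rexp t := by positivity
  have key : (1 + rexp s)⁻¹ - (1 + rexp t)⁻¹ = (rexp t - rexp s) / ((1 + rexp s) * (1 + rexp t)) := by
    field_simp
    ring
  rw [key, abs_div, abs_of_pos (mul_pos hs ht), div_le_iff₀ (mul_pos hs ht)]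
  have h1 : rexp s * ((t - s) + 1) ≤ rexp s * rexp (t - s) := by
    nlinarith [Real.add_one_le_exp (t - s), Real.exp_pos s]
  have h2 : rexp t * ((s - t) + 1) ≤ rexp t * rexp (s - t) := by
    nlinarith [Real.add_one_le_exp (s - t), Real.exp_pos t]
  rw [← Real.exp_add] at h1 h2
  rw [show s + (t - s) = t by ring] at h1
  rw [show t + (s - t) = s by ring] at h2
  rw [abs_sub_comm]
  rcases abs_cases (rexp s - rexp t) with ⟨he, _⟩ | ⟨he, _⟩ <;> rcases abs_cases (s - t) with ⟨ha, _⟩ | ⟨ha, _⟩ <;>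
    rw [he, ha] <;> nlinarith [Real.exp_pos s, Real.exp_pos t]

lemma norm_sq_diff (y a a' : E) :
    |‖y - a‖ ^ 2 - ‖y - a'‖ ^ 2| ≤ ‖a - a'‖ * (2 * ‖y‖ + ‖a‖ + ‖a'‖) := by
  have h1 : |‖y - a‖ - ‖y - a'‖| ≤ ‖a - a'‖ := by
    refine (abs_norm_sub_norm_le (y - a) (y - a')).trans (le_of_eq ?_)
    rw [show y - a - (y - a') = a' - a by abel, norm_sub_rev]
  have h2 : ‖y - a‖ + ‖y - a'‖ ≤ 2 * ‖y‖ + ‖a‖ + ‖a'‖ := by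
    have := norm_sub_le y a; have := norm_sub_le y a'; linarith
  have key : ‖y - a‖ ^ 2 - ‖y - a'‖ ^ 2 = (‖y - a‖ - ‖y - a'‖) * (‖y - a‖ + ‖y - a'‖) := by ring
  have hnn : (0:ℝ) ≤ ‖y - a‖ + ‖y - a'‖ := by positivity
  rw [key, abs_mul, abs_of_nonneg hnn]
  exact mul_le_mul h1 h2 hnn (norm_nonneg _)

lemma v2_lip (y a b a' b' : E) :
    |v2 d y a b - v2 d y a' b'| ≤
      (‖y‖ + (‖a‖ + ‖a'‖ + ‖b‖ + ‖b'‖) / 2) * (‖a - a'‖ + ‖b - b'‖) := by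
  rw [v2_eq, v2_eq]
  refine (sig_lip _ _).trans ?_
  have h1 := norm_sq_diff y a a'
  have h2 := norm_sq_diff y b b'
  have key : (‖y - a‖ ^ 2 - ‖y - b‖ ^ 2) / 2 - (‖y - a'‖ ^ 2 - ‖y - b'‖ ^ 2) / 2 =
      ((‖y - a‖ ^ 2 - ‖y - a'‖ ^ 2) - (‖y - b‖ ^ 2 - ‖y - b'‖ ^ 2)) / 2 := by ring
  rw [key, abs_div, abs_two]
  have habs : |‖y - a‖ ^ 2 - ‖y - a'‖ ^ 2 - (‖y - b‖ ^ 2 - ‖y - b'‖ ^ 2)| ≤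
      |‖y - a‖ ^ 2 - ‖y - a'‖ ^ 2| + |‖y - b‖ ^ 2 - ‖y - b'‖ ^ 2| := abs_sub _ _
  nlinarith [norm_nonneg y, norm_nonneg (a - a'), norm_nonneg (b - b'), norm_nonneg a,
    norm_nonneg a', norm_nonneg b, norm_nonneg b']

lemma continuous_v2 : Continuous (fun p : E × E × E => v2 d p.1 p.2.1 p.2.2) := by
  simp only [v2_eq]
  refine Continuous.inv₀ (by fun_prop) fun p => by positivity

end basics

section integ
variable {d : ℕ}
local notation "E" => EuclideanSpace ℝ (Fin d)

lemma integrable_exp_quarter : Integrable (fun x : E => rexp (-(4:ℝ)⁻¹ * ‖x‖^2)) := by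
  have h := (GaussianFourier.integrable_cexp_neg_mul_sq_norm_add (V := E)
    (b := (4:ℂ)⁻¹) (by norm_num) 0 0).norm
  refine h.congr (Eventually.of_forall fun x => ?_)
  simp [Complex.norm_exp, ← Complex.ofReal_pow]

lemma integrable_gpdf_sq (μ : E) :
    Integrable (fun y : E => gpdf d (y - μ) * (1 + ‖y‖ ^ 2)) := by
  have base : Integrable (fun y : E => rexp (-(4:ℝ)⁻¹ * ‖y - μ‖ ^ 2)) :=
    integrable_exp_quarter.comp_sub_right μ
  set c0 : ℝ := (2 * π) ^ (-(d : ℝ) / 2) with hc0def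
  have hc0 : 0 < c0 := by positivity
  refine ((base.const_mul (c0 * (9 + 2 * ‖μ‖ ^ 2))).mono' ?_
    (Eventually.of_forall fun y => ?_))
  · exact ((continuous_gpdf.comp (continuous_id.sub continuous_const)).mul
      (continuous_const.add ((continuous_norm).pow 2))).aestronglyMeasurable
  · have hy2 : ‖y‖ ^ 2 ≤ 2 * ‖y - μ‖ ^ 2 + 2 * ‖μ‖ ^ 2 := by
      have h := norm_add_le (y - μ) μ
      simp only [sub_add_cancel] at h
      have h2 : ‖y‖ ^ 2 ≤ (‖y - μ‖ + ‖μ‖) ^ 2 := pow_le_pow_left₀ (norm_nonneg y) h 2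
      nlinarith [sq_nonneg (‖y - μ‖ - ‖μ‖)]
    set s : ℝ := ‖y - μ‖ ^ 2 with hsdef
    have hs : 0 ≤ s := by positivity
    have h4 : s / 4 ≤ rexp (s / 4) := by
      nlinarith [Real.add_one_le_exp (s / 4)]
    have hexp : rexp (-s / 2) * rexp (s / 4) = rexp (-(4:ℝ)⁻¹ * s) := by
      rw [← Real.exp_add]; congr 1; ring
    have hgp : gpdf d (y - μ) = c0 * rexp (-s / 2) := rfl
    have hnn : 0 ≤ gpdf d (y - μ) * (1 + ‖y‖ ^ 2) := by
      have := gpdf_pos (d := d) (y - μ); positivity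
    rw [Real.norm_of_nonneg hnn, hgp]
    have he1 : 0 < rexp (-s / 2) := Real.exp_pos _
    have he2 : 0 < rexp (-(4:ℝ)⁻¹ * s) := Real.exp_pos _
    have he3 : 0 < rexp (s / 4) := Real.exp_pos _
    have hmono : rexp (-s / 2) ≤ rexp (-(4:ℝ)⁻¹ * s) := by
      apply Real.exp_le_exp.2; nlinarith
    have hkey : (2 * s) * rexp (-s / 2) ≤ 8 * rexp (-(4:ℝ)⁻¹ * s) := by
      nlinarith
    have hA : (1 + 2 * ‖μ‖ ^ 2) * rexp (-s / 2) ≤ (1 + 2 * ‖μ‖ ^ 2) * rexp (-(4:ℝ)⁻¹ * s) := by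
      apply mul_le_mul_of_nonneg_left hmono; positivity
    have hsum : (1 + 2 * ‖μ‖ ^ 2) * rexp (-s / 2) + 2 * s * rexp (-s / 2) ≤
        (9 + 2 * ‖μ‖ ^ 2) * rexp (-(4:ℝ)⁻¹ * s) := by nlinarith
    calc c0 * rexp (-s / 2) * (1 + ‖y‖ ^ 2)
        ≤ c0 * rexp (-s / 2) * (1 + 2 * ‖μ‖ ^ 2 + 2 * s) := by
          apply mul_le_mul_of_nonneg_left (by linarith) (by positivity)
      _ = c0 * ((1 + 2 * ‖μ‖ ^ 2) * rexp (-s / 2) + 2 * s * rexp (-s / 2)) := by ring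
      _ ≤ c0 * ((9 + 2 * ‖μ‖ ^ 2) * rexp (-(4:ℝ)⁻¹ * s)) :=
          mul_le_mul_of_nonneg_left hsum hc0.le
      _ = c0 * (9 + 2 * ‖μ‖ ^ 2) * rexp (-(4:ℝ)⁻¹ * ‖y - μ‖ ^ 2) := by rw [hsdef]; ring

lemma integrable_mix_smul (μ1s μ2s : E) {F : Type*} [NormedAddCommGroup F] [NormedSpace ℝ F]
    (g : E → F) (hg : AEStronglyMeasurable g (volume : Measure E)) (c₁ c₂ : ℝ)
    (hb : ∀ y, ‖g y‖ ≤ c₁ + c₂ * ‖y‖ ^ 2) :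
    Integrable (fun y => mix2 d μ1s μ2s y • g y) := by
  have hmix : Continuous (mix2 d μ1s μ2s) := continuous_mix2 μ1s μ2s
  have dom : Integrable (fun y : E => ((|c₁| + |c₂|) / 2) *
      (gpdf d (y - μ1s) * (1 + ‖y‖ ^ 2) + gpdf d (y - μ2s) * (1 + ‖y‖ ^ 2))) :=
    ((integrable_gpdf_sq μ1s).add (integrable_gpdf_sq μ2s)).const_mul _
  refine dom.mono' (hmix.aestronglyMeasurable.smul hg) (Eventually.of_forall fun y => ?_)
  rw [norm_smul, Real.norm_of_nonneg (mix2_pos μ1s μ2s y).le]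
  have h1 : ‖g y‖ ≤ (|c₁| + |c₂|) * (1 + ‖y‖ ^ 2) := by
    have := hb y
    have h2 : c₁ + c₂ * ‖y‖ ^ 2 ≤ (|c₁| + |c₂|) * (1 + ‖y‖ ^ 2) := by
      nlinarith [le_abs_self c₁, le_abs_self c₂, norm_nonneg y, abs_nonneg c₁, abs_nonneg c₂,
        sq_nonneg (‖y‖)]
    linarith
  have hmp := (mix2_pos μ1s μ2s y).le
  have hgnn := norm_nonneg (g y)
  have : mix2 d μ1s μ2s y * ‖g y‖ ≤ mix2 d μ1s μ2s y * ((|c₁| + |c₂|) * (1 + ‖y‖ ^ 2)) :=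
    mul_le_mul_of_nonneg_left h1 hmp
  refine this.trans (le_of_eq ?_)
  unfold mix2
  ring

end integ



section prob
variable {d : ℕ} (μ1s μ2s : EuclideanSpace ℝ (Fin d))
  {Ω : Type*} [MeasureSpace Ω] [IsProbabilityMeasure (ℙ : Measure Ω)]
  (Y : ℕ → Ω → EuclideanSpace ℝ (Fin d))

local notation "E" => EuclideanSpace ℝ (Fin d)

lemma slln_mix
    (hmeas : ∀ i, Measurable (Y i))
    (hindep : ProbabilityTheory.iIndepFun Y ℙ)
    (hlaw : ∀ i, Measure.map (Y i) ℙ =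
      volume.withDensity (fun y => ENNReal.ofReal (mix2 d μ1s μ2s y)))
    {F : Type*} [NormedAddCommGroup F] [NormedSpace ℝ F] [CompleteSpace F]
    [MeasurableSpace F] [BorelSpace F] [SecondCountableTopology F]
    (h : E → F) (hh : Continuous h) (c₁ c₂ : ℝ) (hb : ∀ y, ‖h y‖ ≤ c₁ + c₂ * ‖y‖ ^ 2) :
    ∀ᵐ ω ∂ℙ, Tendsto (fun n : ℕ => (n:ℝ)⁻¹ • ∑ i ∈ Finset.range n, h (Y i ω)) atTop
      (nhds (∫ y, mix2 d μ1s μ2s y • h y)) := by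
  have hmixmeas : Measurable (fun y : E => (mix2 d μ1s μ2s y).toNNReal) :=
    (continuous_mix2 μ1s μ2s).measurable.real_toNNReal
  have hdens : (fun y : E => ENNReal.ofReal (mix2 d μ1s μ2s y)) =
      fun y => ((mix2 d μ1s μ2s y).toNNReal : ENNReal) := rfl
  have hsmul : (fun y => ((mix2 d μ1s μ2s y).toNNReal : NNReal) • h y) =
      fun y => mix2 d μ1s μ2s y • h y := by
    funext y
    rw [NNReal.smul_def, Real.coe_toNNReal _ (mix2_pos μ1s μ2s y).le]
  have hIntν : Integrable h (Measure.map (Y 0) ℙ) := by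
    rw [hlaw 0, hdens, integrable_withDensity_iff_integrable_smul hmixmeas, hsmul]
    exact integrable_mix_smul μ1s μ2s h hh.aestronglyMeasurable c₁ c₂ hb
  have hsm : AEStronglyMeasurable h (Measure.map (Y 0) ℙ) := hh.aestronglyMeasurable
  have hint0 : Integrable (fun ω => h (Y 0 ω)) ℙ :=
    (integrable_map_measure hsm (hmeas 0).aemeasurable).1 hIntν
  have hexp : ∫ ω, h (Y 0 ω) ∂ℙ = ∫ y, mix2 d μ1s μ2s y • h y := by
    rw [← integral_map (hmeas 0).aemeasurable hsm, hlaw 0, hdens,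
      integral_withDensity_eq_integral_smul hmixmeas, hsmul]
  have hident : ∀ i, ProbabilityTheory.IdentDistrib (fun ω => h (Y i ω))
      (fun ω => h (Y 0 ω)) ℙ ℙ := fun i =>
    (⟨(hmeas i).aemeasurable, (hmeas 0).aemeasurable, by rw [hlaw i, hlaw 0]⟩ :
      ProbabilityTheory.IdentDistrib (Y i) (Y 0) ℙ ℙ).comp hh.measurable
  have hpair : Pairwise (Function.onFun (ProbabilityTheory.IndepFun · · ℙ) fun i ω => h (Y i ω)) :=
    fun i j hij => ((hindep.indepFun hij).comp hh.measurable hh.measurable)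
  have hsl := ProbabilityTheory.strong_law_ae (fun i ω => h (Y i ω)) hint0 hpair hident
  rw [show (ℙ[fun ω => h (Y 0 ω)]) = ∫ y, mix2 d μ1s μ2s y • h y from hexp] at hsl
  exact hsl

end prob



section det
variable {d : ℕ}
local notation "E" => EuclideanSpace ℝ (Fin d)

lemma tendsto_ratio (Z : ℕ → E) (a b : E) (q : ℕ → E × E)
    (hq1 : Tendsto (fun n => (q n).1) atTop (nhds a))
    (hq2 : Tendsto (fun n => (q n).2) atTop (nhds b))
    {I : E} {c m1 m2 : ℝ} (hc : 0 < c)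
    (hA : Tendsto (fun n : ℕ => (n:ℝ)⁻¹ • ∑ i ∈ Finset.range n, v2 d (Z i) a b • Z i)
      atTop (nhds I))
    (hB : Tendsto (fun n : ℕ => (n:ℝ)⁻¹ • ∑ i ∈ Finset.range n, v2 d (Z i) a b)
      atTop (nhds c))
    (h1 : Tendsto (fun n : ℕ => (n:ℝ)⁻¹ • ∑ i ∈ Finset.range n, ‖Z i‖) atTop (nhds m1))
    (h2 : Tendsto (fun n : ℕ => (n:ℝ)⁻¹ • ∑ i ∈ Finset.range n, ‖Z i‖ ^ 2) atTop (nhds m2)) :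
    Tendsto (fun n => (∑ i ∈ Finset.range n, v2 d (Z i) (q n).1 (q n).2)⁻¹ •
      ∑ i ∈ Finset.range n, v2 d (Z i) (q n).1 (q n).2 • Z i) atTop (nhds (c⁻¹ • I)) := by
  classical
  set D : ℕ → ℝ := fun n => ‖(q n).1 - a‖ + ‖(q n).2 - b‖ with hD
  set M : ℕ → ℝ := fun n => (‖(q n).1‖ + ‖a‖ + ‖(q n).2‖ + ‖b‖) / 2 with hM
  have hD0 : Tendsto D atTop (nhds 0) := by
    have l1 : Tendsto (fun n => ‖(q n).1 - a‖) atTop (nhds 0) :=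
      tendsto_iff_norm_sub_tendsto_zero.1 hq1
    have l2 : Tendsto (fun n => ‖(q n).2 - b‖) atTop (nhds 0) :=
      tendsto_iff_norm_sub_tendsto_zero.1 hq2
    simpa using l1.add l2
  have hMlim : Tendsto M atTop (nhds ((‖a‖ + ‖a‖ + ‖b‖ + ‖b‖) / 2)) :=
    (((hq1.norm.add tendsto_const_nhds).add hq2.norm).add tendsto_const_nhds).div_const 2
  have hDnn : ∀ n, 0 ≤ D n := fun n => by positivity
  have hMnn : ∀ n, 0 ≤ M n := fun n => by positivity
  have hlip : ∀ n i, |v2 d (Z i) (q n).1 (q n).2 - v2 d (Z i) a b| ≤ (‖Z i‖ + M n) * D n :=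
    fun n i => v2_lip (Z i) (q n).1 (q n).2 a b
  -- numerator
  have keyA : Tendsto (fun n : ℕ => (n:ℝ)⁻¹ • ∑ i ∈ Finset.range n,
      v2 d (Z i) (q n).1 (q n).2 • Z i) atTop (nhds I) := by
    have hdist : ∀ n : ℕ, dist ((n:ℝ)⁻¹ • ∑ i ∈ Finset.range n, v2 d (Z i) (q n).1 (q n).2 • Z i)
        ((n:ℝ)⁻¹ • ∑ i ∈ Finset.range n, v2 d (Z i) a b • Z i) ≤
        D n * (((n:ℝ)⁻¹ • ∑ i ∈ Finset.range n, ‖Z i‖ ^ 2) +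
          M n * ((n:ℝ)⁻¹ • ∑ i ∈ Finset.range n, ‖Z i‖)) := by
      intro n
      rw [dist_eq_norm, ← smul_sub, ← Finset.sum_sub_distrib]
      have hn : (0:ℝ) ≤ (n:ℝ)⁻¹ := by positivity
      calc ‖(n:ℝ)⁻¹ • ∑ i ∈ Finset.range n,
              (v2 d (Z i) (q n).1 (q n).2 • Z i - v2 d (Z i) a b • Z i)‖
          = (n:ℝ)⁻¹ * ‖∑ i ∈ Finset.range n,
              (v2 d (Z i) (q n).1 (q n).2 • Z i - v2 d (Z i) a b • Z i)‖ := by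
            rw [norm_smul, Real.norm_of_nonneg hn]
        _ ≤ (n:ℝ)⁻¹ * ∑ i ∈ Finset.range n,
              ‖v2 d (Z i) (q n).1 (q n).2 • Z i - v2 d (Z i) a b • Z i‖ := by
            exact mul_le_mul_of_nonneg_left (norm_sum_le _ _) hn
        _ ≤ (n:ℝ)⁻¹ * ∑ i ∈ Finset.range n, (D n * ‖Z i‖ ^ 2 + (D n * M n) * ‖Z i‖) := by
            refine mul_le_mul_of_nonneg_left (Finset.sum_le_sum fun i _ => ?_) hn
            rw [← sub_smul, norm_smul]
            have := hlip n i
            have hZ := norm_nonneg (Z i)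
            have h3 : ‖v2 d (Z i) (q n).1 (q n).2 - v2 d (Z i) a b‖ * ‖Z i‖ ≤
                ((‖Z i‖ + M n) * D n) * ‖Z i‖ := by
              apply mul_le_mul_of_nonneg_right _ hZ
              simpa [Real.norm_eq_abs] using this
            refine h3.trans (le_of_eq (by ring))
        _ = D n * (((n:ℝ)⁻¹ • ∑ i ∈ Finset.range n, ‖Z i‖ ^ 2) +
              M n * ((n:ℝ)⁻¹ • ∑ i ∈ Finset.range n, ‖Z i‖)) := by
            rw [Finset.sum_add_distrib, ← Finset.mul_sum, ← Finset.mul_sum]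
            simp only [smul_eq_mul]
            ring
    have hRHS : Tendsto (fun n => D n * (((n:ℝ)⁻¹ • ∑ i ∈ Finset.range n, ‖Z i‖ ^ 2) +
        M n * ((n:ℝ)⁻¹ • ∑ i ∈ Finset.range n, ‖Z i‖))) atTop (nhds 0) := by
      have := hD0.mul (h2.add (hMlim.mul h1))
      simpa using this
    have hdist0 : Tendsto (fun n : ℕ => dist ((n:ℝ)⁻¹ • ∑ i ∈ Finset.range n,
        v2 d (Z i) (q n).1 (q n).2 • Z i)
        ((n:ℝ)⁻¹ • ∑ i ∈ Finset.range n, v2 d (Z i) a b • Z i)) atTop (nhds 0) :=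
      squeeze_zero (fun n => dist_nonneg) hdist hRHS
    rw [tendsto_iff_dist_tendsto_zero]
    have htri : ∀ n : ℕ, dist ((n:ℝ)⁻¹ • ∑ i ∈ Finset.range n,
        v2 d (Z i) (q n).1 (q n).2 • Z i) I ≤
        dist ((n:ℝ)⁻¹ • ∑ i ∈ Finset.range n, v2 d (Z i) (q n).1 (q n).2 • Z i)
          ((n:ℝ)⁻¹ • ∑ i ∈ Finset.range n, v2 d (Z i) a b • Z i) +
        dist ((n:ℝ)⁻¹ • ∑ i ∈ Finset.range n, v2 d (Z i) a b • Z i) I :=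
      fun n => dist_triangle _ _ _
    have := hdist0.add (tendsto_iff_dist_tendsto_zero.1 hA)
    refine squeeze_zero (fun n => dist_nonneg) htri (by simpa using this)
  -- denominator
  have keyB : Tendsto (fun n : ℕ => (n:ℝ)⁻¹ • ∑ i ∈ Finset.range n,
      v2 d (Z i) (q n).1 (q n).2) atTop (nhds c) := by
    have hdist : ∀ n : ℕ, dist ((n:ℝ)⁻¹ • ∑ i ∈ Finset.range n, v2 d (Z i) (q n).1 (q n).2)
        ((n:ℝ)⁻¹ • ∑ i ∈ Finset.range n, v2 d (Z i) a b) ≤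
        D n * (((n:ℝ)⁻¹ • ∑ i ∈ Finset.range n, ‖Z i‖) + M n) := by
      intro n
      rw [Real.dist_eq, ← smul_sub, ← Finset.sum_sub_distrib]
      have hn : (0:ℝ) ≤ (n:ℝ)⁻¹ := by positivity
      have hn1 : (n:ℝ)⁻¹ * (n:ℝ) ≤ 1 := by
        rcases Nat.eq_zero_or_pos n with h | h
        · simp [h]
        · rw [inv_mul_cancel₀ (by exact_mod_cast h.ne' : (n:ℝ) ≠ 0)]
      calc |(n:ℝ)⁻¹ • ∑ i ∈ Finset.range n,
              (v2 d (Z i) (q n).1 (q n).2 - v2 d (Z i) a b)|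
          = (n:ℝ)⁻¹ * |∑ i ∈ Finset.range n,
              (v2 d (Z i) (q n).1 (q n).2 - v2 d (Z i) a b)| := by
            rw [smul_eq_mul, abs_mul, abs_of_nonneg hn]
        _ ≤ (n:ℝ)⁻¹ * ∑ i ∈ Finset.range n,
              |v2 d (Z i) (q n).1 (q n).2 - v2 d (Z i) a b| := by
            exact mul_le_mul_of_nonneg_left (Finset.abs_sum_le_sum_abs _ _) hn
        _ ≤ (n:ℝ)⁻¹ * ∑ i ∈ Finset.range n, (D n * ‖Z i‖ + D n * M n) := by
            refine mul_le_mul_of_nonneg_left (Finset.sum_le_sum fun i _ => ?_) hn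
            refine (hlip n i).trans (le_of_eq (by ring))
        _ = D n * ((n:ℝ)⁻¹ • ∑ i ∈ Finset.range n, ‖Z i‖) +
              ((n:ℝ)⁻¹ * (n:ℝ)) * (D n * M n) := by
            rw [Finset.sum_add_distrib, ← Finset.mul_sum, Finset.sum_const, Finset.card_range]
            simp only [smul_eq_mul, nsmul_eq_mul]
            ring
        _ ≤ D n * (((n:ℝ)⁻¹ • ∑ i ∈ Finset.range n, ‖Z i‖) + M n) := by
            have hDM : 0 ≤ D n * M n := mul_nonneg (hDnn n) (hMnn n)
            have : ((n:ℝ)⁻¹ * (n:ℝ)) * (D n * M n) ≤ 1 * (D n * M n) :=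
              mul_le_mul_of_nonneg_right hn1 hDM
            simp only [smul_eq_mul]
            nlinarith [this]
    have hRHS : Tendsto (fun n => D n * (((n:ℝ)⁻¹ • ∑ i ∈ Finset.range n, ‖Z i‖) + M n))
        atTop (nhds 0) := by
      have := hD0.mul (h1.add hMlim)
      simpa using this
    have hdist0 := squeeze_zero (fun n => dist_nonneg) hdist hRHS
    rw [tendsto_iff_dist_tendsto_zero]
    have htri : ∀ n : ℕ, dist ((n:ℝ)⁻¹ • ∑ i ∈ Finset.range n, v2 d (Z i) (q n).1 (q n).2) c ≤
        dist ((n:ℝ)⁻¹ • ∑ i ∈ Finset.range n, v2 d (Z i) (q n).1 (q n).2)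
          ((n:ℝ)⁻¹ • ∑ i ∈ Finset.range n, v2 d (Z i) a b) +
        dist ((n:ℝ)⁻¹ • ∑ i ∈ Finset.range n, v2 d (Z i) a b) c :=
      fun n => dist_triangle _ _ _
    have := hdist0.add (tendsto_iff_dist_tendsto_zero.1 hB)
    exact squeeze_zero (fun n => dist_nonneg) htri (by simpa using this)
  -- combine
  have hfin : Tendsto (fun n : ℕ => ((n:ℝ)⁻¹ • ∑ i ∈ Finset.range n,
      v2 d (Z i) (q n).1 (q n).2)⁻¹ • ((n:ℝ)⁻¹ • ∑ i ∈ Finset.range n,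
      v2 d (Z i) (q n).1 (q n).2 • Z i)) atTop (nhds (c⁻¹ • I)) :=
    (keyB.inv₀ hc.ne').smul keyA
  refine hfin.congr' ?_
  filter_upwards [eventually_ge_atTop 1] with n hn
  have hn0 : (n:ℝ) ≠ 0 := by exact_mod_cast (Nat.one_le_iff_ne_zero.1 hn)
  rw [smul_smul, smul_eq_mul, mul_inv, inv_inv]
  congr 1
  rw [mul_comm (↑n : ℝ), mul_assoc, mul_inv_cancel₀ hn0, mul_one]

end det



section pop
variable {d : ℕ} (μ1s μ2s : EuclideanSpace ℝ (Fin d))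
local notation "E" => EuclideanSpace ℝ (Fin d)

lemma continuous_v2_fst (a b : E) : Continuous fun y : E => v2 d y a b := by
  simp only [v2_eq]
  exact Continuous.inv₀ (by fun_prop) fun y => by positivity

lemma integrable_v2_mix (a b : E) :
    Integrable (fun y : E => v2 d y a b * mix2 d μ1s μ2s y) := by
  have h := integrable_mix_smul μ1s μ2s (fun y : E => v2 d y a b)
    (continuous_v2_fst a b).aestronglyMeasurable 1 0 (fun y => by
      rw [Real.norm_of_nonneg (v2_pos y a b).le]
      simpa using v2_le_one y a b)
  refine h.congr (Eventually.of_forall fun y => ?_)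
  simp only [smul_eq_mul]
  ring

lemma integral_v2_mix_pos (a b : E) :
    0 < ∫ y, v2 d y a b * mix2 d μ1s μ2s y := by
  refine (integral_pos_iff_support_of_nonneg
    (fun y => (mul_pos (v2_pos y a b) (mix2_pos μ1s μ2s y)).le)
    (integrable_v2_mix μ1s μ2s a b)).2 ?_
  have hsupp : (Function.support fun y : E => v2 d y a b * mix2 d μ1s μ2s y) = Set.univ :=
    Set.eq_univ_iff_forall.2 fun y => (mul_pos (v2_pos y a b) (mix2_pos μ1s μ2s y)).ne'
  rw [hsupp]
  exact isOpen_univ.measure_pos volume ⟨0, trivial⟩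

end pop

section measta
variable {d : ℕ} {Ω : Type*} [MeasureSpace Ω]
local notation "E" => EuclideanSpace ℝ (Fin d)

set_option maxHeartbeats 1000000 in
lemma measurable_sem2 (Y : ℕ → Ω → E) (hmeas : ∀ i, Measurable (Y i))
    (μ10 μ20 : E) (n : ℕ) :
    ∀ t, Measurable (fun ω => sem2 d (fun i => Y i ω) n μ10 μ20 t) := by
  intro t
  induction t with
  | zero =>
    simp only [sem2]
    exact measurable_const
  | succ t ih =>
    have h1 : Measurable fun ω => (sem2 d (fun i => Y i ω) n μ10 μ20 t).1 :=
      measurable_fst.comp ih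
    have h2 : Measurable fun ω => (sem2 d (fun i => Y i ω) n μ10 μ20 t).2 :=
      measurable_snd.comp ih
    have hv : ∀ i : ℕ, Measurable fun ω => v2 d (Y i ω)
        (sem2 d (fun j => Y j ω) n μ10 μ20 t).1 (sem2 d (fun j => Y j ω) n μ10 μ20 t).2 :=
      fun i => by
        simp only [v2_eq]
        have m1 : Measurable fun ω =>
            ‖Y i ω - (sem2 d (fun j => Y j ω) n μ10 μ20 t).1‖ ^ 2 :=
          ((hmeas i).sub h1).norm.pow_const 2
        have m2 : Measurable fun ω =>
            ‖Y i ω - (sem2 d (fun j => Y j ω) n μ10 μ20 t).2‖ ^ 2 :=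
          ((hmeas i).sub h2).norm.pow_const 2
        exact (measurable_const.add ((m1.sub m2).div_const 2).exp).inv
    have hs1 : Measurable fun ω => ∑ i ∈ Finset.range n, v2 d (Y i ω)
        (sem2 d (fun j => Y j ω) n μ10 μ20 t).1 (sem2 d (fun j => Y j ω) n μ10 μ20 t).2 :=
      Finset.measurable_sum _ fun i _ => hv i
    have hs2 : Measurable fun ω => ∑ i ∈ Finset.range n, v2 d (Y i ω)
        (sem2 d (fun j => Y j ω) n μ10 μ20 t).1 (sem2 d (fun j => Y j ω) n μ10 μ20 t).2 • Y i ω :=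
      Finset.measurable_sum _ fun i _ => (hv i).smul (hmeas i)
    have hs3 : Measurable fun ω => ∑ i ∈ Finset.range n, (1 - v2 d (Y i ω)
        (sem2 d (fun j => Y j ω) n μ10 μ20 t).1 (sem2 d (fun j => Y j ω) n μ10 μ20 t).2) :=
      Finset.measurable_sum _ fun i _ => measurable_const.sub (hv i)
    have hs4 : Measurable fun ω => ∑ i ∈ Finset.range n, (1 - v2 d (Y i ω)
        (sem2 d (fun j => Y j ω) n μ10 μ20 t).1
        (sem2 d (fun j => Y j ω) n μ10 μ20 t).2) • Y i ω :=
      Finset.measurable_sum _ fun i _ => (measurable_const.sub (hv i)).smul (hmeas i)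
    simp only [sem2]
    exact (hs1.inv.smul hs2).prodMk (hs3.inv.smul hs4)

end measta


/-- Theorem 7: for each fixed iteration `t`, the Sample-based EM iterates converge in
probability to the Population EM iterates as `n → ∞`. -/
theorem stmt7 (d : ℕ) (hd : 1 ≤ d) (μ1s μ2s μ10 μ20 : EuclideanSpace ℝ (Fin d))
    {Ω : Type*} [MeasureSpace Ω] [IsProbabilityMeasure (ℙ : Measure Ω)]
    (Y : ℕ → Ω → EuclideanSpace ℝ (Fin d))
    (hmeas : ∀ i, Measurable (Y i))
    (hindep : ProbabilityTheory.iIndepFun Y ℙ)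
    (hlaw : ∀ i, Measure.map (Y i) ℙ =
      volume.withDensity (fun y => ENNReal.ofReal (mix2 d μ1s μ2s y)))
    (t : ℕ) (ε : ℝ) (hε : 0 < ε) :
    Tendsto (fun n => ℙ {ω | ε < ‖(sem2 d (fun i => Y i ω) n μ10 μ20 t).1 -
        (em2 d μ1s μ2s μ10 μ20 t).1‖}) atTop (nhds 0) ∧
    Tendsto (fun n => ℙ {ω | ε < ‖(sem2 d (fun i => Y i ω) n μ10 μ20 t).2 -
        (em2 d μ1s μ2s μ10 μ20 t).2‖}) atTop (nhds 0) := by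

  classical
  -- Almost-sure convergence of both components, by induction on `t`.
  have key : ∀ s : ℕ, ∀ᵐ ω ∂ℙ,
      Tendsto (fun n => (sem2 d (fun i => Y i ω) n μ10 μ20 s).1) atTop
        (nhds (em2 d μ1s μ2s μ10 μ20 s).1) ∧
      Tendsto (fun n => (sem2 d (fun i => Y i ω) n μ10 μ20 s).2) atTop
        (nhds (em2 d μ1s μ2s μ10 μ20 s).2) := by
    intro s
    induction s with
    | zero =>
      refine Eventually.of_forall fun ω => ⟨?_, ?_⟩ <;>
        · simp only [sem2, em2]
          exact tendsto_const_nhds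
    | succ t ih =>
      set p : EuclideanSpace ℝ (Fin d) × EuclideanSpace ℝ (Fin d) :=
        em2 d μ1s μ2s μ10 μ20 t with hp
      have hb1 : ∀ y : EuclideanSpace ℝ (Fin d), ‖v2 d y p.1 p.2 • y‖ ≤ 1 + 1 * ‖y‖ ^ 2 := by
        intro y
        rw [norm_smul, Real.norm_of_nonneg (v2_pos y p.1 p.2).le]
        have h1 := v2_le_one y p.1 p.2
        have h2 := (v2_pos y p.1 p.2).le
        nlinarith [norm_nonneg y, sq_nonneg (‖y‖ - 1)]
      have hb1' : ∀ y : EuclideanSpace ℝ (Fin d), ‖v2 d y p.2 p.1 • y‖ ≤ 1 + 1 * ‖y‖ ^ 2 := by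
        intro y
        rw [norm_smul, Real.norm_of_nonneg (v2_pos y p.2 p.1).le]
        have h1 := v2_le_one y p.2 p.1
        have h2 := (v2_pos y p.2 p.1).le
        nlinarith [norm_nonneg y, sq_nonneg (‖y‖ - 1)]
      have hb2 : ∀ y : EuclideanSpace ℝ (Fin d), ‖v2 d y p.1 p.2‖ ≤ 1 + 0 * ‖y‖ ^ 2 := by
        intro y
        rw [Real.norm_of_nonneg (v2_pos y p.1 p.2).le]
        simpa using v2_le_one y p.1 p.2
      have hb2' : ∀ y : EuclideanSpace ℝ (Fin d), ‖v2 d y p.2 p.1‖ ≤ 1 + 0 * ‖y‖ ^ 2 := by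
        intro y
        rw [Real.norm_of_nonneg (v2_pos y p.2 p.1).le]
        simpa using v2_le_one y p.2 p.1
      have E1 := slln_mix μ1s μ2s Y hmeas hindep hlaw
        (fun y => v2 d y p.1 p.2 • y) ((continuous_v2_fst p.1 p.2).smul continuous_id) 1 1 hb1
      have E2 := slln_mix μ1s μ2s Y hmeas hindep hlaw
        (fun y => v2 d y p.1 p.2) (continuous_v2_fst p.1 p.2) 1 0 hb2
      have E3 := slln_mix μ1s μ2s Y hmeas hindep hlaw
        (fun y => v2 d y p.2 p.1 • y) ((continuous_v2_fst p.2 p.1).smul continuous_id) 1 1 hb1'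
      have E4 := slln_mix μ1s μ2s Y hmeas hindep hlaw
        (fun y => v2 d y p.2 p.1) (continuous_v2_fst p.2 p.1) 1 0 hb2'
      have E5 := slln_mix μ1s μ2s Y hmeas hindep hlaw
        (fun y : EuclideanSpace ℝ (Fin d) => ‖y‖) continuous_norm 1 1 (fun y => by
          rw [Real.norm_of_nonneg (norm_nonneg y)]
          nlinarith [norm_nonneg y, sq_nonneg (‖y‖ - 1)])
      have E6 := slln_mix μ1s μ2s Y hmeas hindep hlaw
        (fun y : EuclideanSpace ℝ (Fin d) => ‖y‖ ^ 2) (continuous_norm.pow 2) 0 1 (fun y => by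
          rw [Real.norm_of_nonneg (by positivity : (0:ℝ) ≤ ‖y‖ ^ 2)]
          nlinarith [norm_nonneg y])
      -- rewrite the limits into the form appearing in `em2`
      have e1 : (fun y : EuclideanSpace ℝ (Fin d) =>
          mix2 d μ1s μ2s y • (v2 d y p.1 p.2 • y)) =
          fun y => (v2 d y p.1 p.2 * mix2 d μ1s μ2s y) • y :=
        funext fun y => by rw [smul_smul, mul_comm]
      have e2 : (fun y : EuclideanSpace ℝ (Fin d) =>
          mix2 d μ1s μ2s y • v2 d y p.1 p.2) =
          fun y => v2 d y p.1 p.2 * mix2 d μ1s μ2s y :=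
        funext fun y => by rw [smul_eq_mul, mul_comm]
      have e3 : (fun y : EuclideanSpace ℝ (Fin d) =>
          mix2 d μ1s μ2s y • (v2 d y p.2 p.1 • y)) =
          fun y => (v2 d y p.2 p.1 * mix2 d μ1s μ2s y) • y :=
        funext fun y => by rw [smul_smul, mul_comm]
      have e4 : (fun y : EuclideanSpace ℝ (Fin d) =>
          mix2 d μ1s μ2s y • v2 d y p.2 p.1) =
          fun y => v2 d y p.2 p.1 * mix2 d μ1s μ2s y :=
        funext fun y => by rw [smul_eq_mul, mul_comm]
      rw [show (∫ y, mix2 d μ1s μ2s y • (v2 d y p.1 p.2 • y)) =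
        ∫ y, (v2 d y p.1 p.2 * mix2 d μ1s μ2s y) • y from by rw [e1]] at E1
      rw [show (∫ y, mix2 d μ1s μ2s y • v2 d y p.1 p.2) =
        ∫ y, v2 d y p.1 p.2 * mix2 d μ1s μ2s y from by rw [e2]] at E2
      rw [show (∫ y, mix2 d μ1s μ2s y • (v2 d y p.2 p.1 • y)) =
        ∫ y, (v2 d y p.2 p.1 * mix2 d μ1s μ2s y) • y from by rw [e3]] at E3
      rw [show (∫ y, mix2 d μ1s μ2s y • v2 d y p.2 p.1) =
        ∫ y, v2 d y p.2 p.1 * mix2 d μ1s μ2s y from by rw [e4]] at E4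
      have hc1 : 0 < ∫ y, v2 d y p.1 p.2 * mix2 d μ1s μ2s y :=
        integral_v2_mix_pos μ1s μ2s p.1 p.2
      have hc2 : 0 < ∫ y, v2 d y p.2 p.1 * mix2 d μ1s μ2s y :=
        integral_v2_mix_pos μ1s μ2s p.2 p.1
      filter_upwards [E1, E2, E3, E4, E5, E6, ih] with ω h1 h2 h3 h4 h5 h6 hih
      set Z : ℕ → EuclideanSpace ℝ (Fin d) := fun i => Y i ω with hZ
      set q : ℕ → EuclideanSpace ℝ (Fin d) × EuclideanSpace ℝ (Fin d) :=
        fun n => sem2 d (fun i => Y i ω) n μ10 μ20 t with hq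
      constructor
      · have hT := tendsto_ratio Z p.1 p.2 q hih.1 hih.2 hc1 h1 h2 h5 h6
        have hsem : (fun n => (sem2 d (fun i => Y i ω) n μ10 μ20 (t+1)).1) =
            fun n => (∑ i ∈ Finset.range n, v2 d (Z i) (q n).1 (q n).2)⁻¹ •
              ∑ i ∈ Finset.range n, v2 d (Z i) (q n).1 (q n).2 • Z i := rfl
        have hem : (em2 d μ1s μ2s μ10 μ20 (t+1)).1 =
            (∫ y, v2 d y p.1 p.2 * mix2 d μ1s μ2s y)⁻¹ •
              ∫ y, (v2 d y p.1 p.2 * mix2 d μ1s μ2s y) • y := rfl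
        rw [hsem, hem]
        exact hT
      · have hT := tendsto_ratio Z p.2 p.1 (fun n => ((q n).2, (q n).1))
          hih.2 hih.1 hc2 h3 h4 h5 h6
        have hsem : (fun n => (sem2 d (fun i => Y i ω) n μ10 μ20 (t+1)).2) =
            fun n => (∑ i ∈ Finset.range n, v2 d (Z i) (q n).2 (q n).1)⁻¹ •
              ∑ i ∈ Finset.range n, v2 d (Z i) (q n).2 (q n).1 • Z i := by
          funext n
          show (∑ i ∈ Finset.range n, (1 - v2 d (Z i) (q n).1 (q n).2))⁻¹ •
              ∑ i ∈ Finset.range n, (1 - v2 d (Z i) (q n).1 (q n).2) • Z i = _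
          simp only [one_sub_v2]
        have hem : (em2 d μ1s μ2s μ10 μ20 (t+1)).2 =
            (∫ y, v2 d y p.2 p.1 * mix2 d μ1s μ2s y)⁻¹ •
              ∫ y, (v2 d y p.2 p.1 * mix2 d μ1s μ2s y) • y := by
          show (∫ y, (1 - v2 d y p.1 p.2) * mix2 d μ1s μ2s y)⁻¹ •
              (∫ y, ((1 - v2 d y p.1 p.2) * mix2 d μ1s μ2s y) • y) = _
          simp only [one_sub_v2]
        rw [hsem, hem]
        exact hT
  -- From a.s. convergence to convergence in probability.
  have main : ∀ (f : ℕ → Ω → EuclideanSpace ℝ (Fin d)) (g : EuclideanSpace ℝ (Fin d)),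
      (∀ n, AEStronglyMeasurable (f n) ℙ) →
      (∀ᵐ ω ∂ℙ, Tendsto (fun n => f n ω) atTop (nhds g)) →
      Tendsto (fun n => ℙ {ω | ε < ‖f n ω - g‖}) atTop (nhds 0) := by
    intro f g hf hae
    have htim : TendstoInMeasure ℙ f atTop (fun _ => g) :=
      tendstoInMeasure_of_tendsto_ae hf hae
    have h := htim (ENNReal.ofReal ε) (ENNReal.ofReal_pos.2 hε)
    refine tendsto_of_tendsto_of_tendsto_of_le_of_le tendsto_const_nhds h
      (fun n => bot_le) (fun n => measure_mono ?_)
    intro ω hω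
    rw [Set.mem_setOf_eq, edist_dist, dist_eq_norm]
    exact ENNReal.ofReal_le_ofReal (le_of_lt hω)
  constructor
  · refine main (fun n ω => (sem2 d (fun i => Y i ω) n μ10 μ20 t).1) _
      (fun n => (measurable_fst.comp (measurable_sem2 Y hmeas μ10 μ20 n t)).aestronglyMeasurable)
      ((key t).mono fun ω h => h.1)
  · refine main (fun n ω => (sem2 d (fun i => Y i ω) n μ10 μ20 t).2) _
      (fun n => (measurable_snd.comp (measurable_sem2 Y hmeas μ10 μ20 n t)).aestronglyMeasurable)
      ((key t).mono fun ω h => h.2)
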